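/- Let K be a number field, let p be a rational prime, and let P_∞ be a fixed infinite place of K. Define the divisor ω_K' on K as follows: at each nonzero prime ideal Q of 𝓞_K its coefficient is r_Q − 2e_Q·[Q divides p𝓞_K], where r_Q is the exponent of Q in the different ideal of 𝓞_K over ℤ and e_Q is the ramification index of Q over p; at each complex infinite place its coefficient is −log 2, at each real infinite place its coefficient is 0, and the coefficient at P_∞ is additionally increased by a_∞ = (∑_{Q | p} 2e_Q·log N(Q))/m_{P_∞}. Then deg ω_K' = |disc_K|·2^{-S₂(K)}. -/

import Mathlib

open NumberField IsDedekindDomain Ideal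

variable (K : Type*) [Field K] [NumberField K]

/-- A divisor on a number field: a finitely supported integer coefficient at each
nonzero prime ideal of the ring of integers, and a real coefficient at each infinite place. -/
structure Divisor where
  a : HeightOneSpectrum (𝓞 K) → ℤ
  r : InfinitePlace K → ℝ
  fin : (Function.support a).Finite

variable {K}

/-- The (multiplicative) degree of a divisor:
`deg D = ∏_P N(P)^(a_P) * ∏_w exp (m_w * r_w)`. -/
noncomputable def Divisor.deg (D : Divisor K) : ℝ :=
  (∏ᶠ P : HeightOneSpectrum (𝓞 K), (absNorm P.asIdeal : ℝ) ^ (D.a P)) *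
    ∏ w : InfinitePlace K, Real.exp (w.mult * D.r w)

open scoped Classical in
/-- The normalized P-adic absolute value `|α|_P = N(P)^(-v_P α)`. -/
noncomputable def padicAbs (P : HeightOneSpectrum (𝓞 K)) (α : K) : ℝ :=
  if hα : α = 0 then 0
  else (absNorm P.asIdeal : ℝ) ^
    (Multiplicative.toAdd (WithZero.unzero ((P.valuation K).ne_zero_iff.mpr hα)))

/-- The set of multiples of a divisor:
`H⁰(D) = {α : |α|_P ≤ N(P)^(a_P) for all P, and w(α)^(m_w) ≤ exp (m_w * r_w) for all w}`. -/
def H0 (D : Divisor K) : Set K :=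
  {α | (∀ P : HeightOneSpectrum (𝓞 K), padicAbs P α ≤ (absNorm P.asIdeal : ℝ) ^ (D.a P)) ∧
    ∀ w : InfinitePlace K, (w α) ^ w.mult ≤ Real.exp (w.mult * D.r w)}

/-- `h⁰(D)` is the cardinality of `H⁰(D)`. -/
noncomputable def h0 (D : Divisor K) : ℕ := Nat.card (H0 D)

/-- Coefficientwise difference of divisors. -/
noncomputable def Divisor.sub (D E : Divisor K) : Divisor K :=
  ⟨D.a - E.a, D.r - E.r, ((D.fin.union E.fin).subset (Function.support_sub D.a E.a))⟩

variable (K)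

/-- `S₁(K)` is the number of real places of `K`. -/
noncomputable def S1 : ℕ := InfinitePlace.nrRealPlaces K

/-- `S₂(K)` is twice the number of complex places of `K`. -/
noncomputable def S2 : ℕ := 2 * InfinitePlace.nrComplexPlaces K

open scoped Classical in
/-- The exponent of the nonzero prime ideal `P` in the factorization of the ideal `I`. -/
noncomputable def primeExponent {R : Type*} [CommRing R] [IsDedekindDomain R]
    (P : HeightOneSpectrum R) (I : Ideal R) : ℕ :=
  (UniqueFactorizationMonoid.normalizedFactors I).count P.asIdeal


open scoped nonZeroDivisors

open FractionalIdeal in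
theorem my_absNorm_differentIdeal :
    Ideal.absNorm (differentIdeal ℤ (𝓞 K)) = (discr K).natAbs := by
  classical
  set b := RingOfIntegers.basis K with hb
  set b₀ := integralBasis K with hb₀
  have hnd : (Algebra.traceForm ℚ K).Nondegenerate := traceForm_nondegenerate ℚ K
  set d := (Algebra.traceForm ℚ K).dualBasis hnd b₀ with hd
  have h0 : (discr K : ℚ) ≠ 0 := Int.cast_ne_zero.mpr (discr_ne_zero K)
  have hmul : Algebra.traceMatrix ℚ b₀ * b₀.toMatrix d = 1 := by
    ext i k
    rw [Matrix.mul_apply, Matrix.one_apply]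
    have h2 : ∑ j, Algebra.traceMatrix ℚ b₀ i j * b₀.toMatrix d j k
        = Algebra.traceForm ℚ K (b₀ i) (d k) := by
      conv_rhs => rw [← b₀.sum_repr (d k)]
      rw [map_sum]
      refine Finset.sum_congr rfl fun j _ => ?_
      rw [Algebra.traceMatrix_apply, Module.Basis.toMatrix_apply, map_smul, smul_eq_mul, mul_comm]
    rw [h2, LinearMap.BilinForm.apply_dualBasis_right hnd (Algebra.traceForm_isSymm ℚ) b₀ i k]
  have hdm : (b₀.toMatrix d).det * (discr K : ℚ) = 1 := by
    have h := congrArg Matrix.det hmul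
    rw [Matrix.det_mul, Matrix.det_one] at h
    rw [coe_discr, Algebra.discr_def, mul_comm]
    exact h
  have hone : (Submodule.restrictScalars ℤ (1 : Submodule (𝓞 K) K))
      = Submodule.span ℤ (Set.range ⇑b₀) := by
    ext x
    rw [Submodule.restrictScalars_mem, Submodule.one_eq_range, mem_span_integralBasis K]
    simp [LinearMap.mem_range, RingHom.mem_range, Algebra.linearMap_apply]
  have hspan : Submodule.restrictScalars ℤ
        ((dual ℤ ℚ (1 : FractionalIdeal (𝓞 K)⁰ K) : FractionalIdeal (𝓞 K)⁰ K) : Submodule (𝓞 K) K)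
      = Submodule.span ℤ (Set.range ⇑d) := by
    rw [coe_dual_one, ← LinearMap.BilinForm.dualSubmodule_span_of_basis _ hnd b₀, ← hone]
    ext x
    exact Iff.rfl
  have hinj : Function.Injective fun (r : ℤ) => r • (1 : ℚ) := by
    intro x y h
    have : (x : ℚ) = y := by simpa using h
    exact_mod_cast this
  have hli : LinearIndependent ℤ ⇑d := d.linearIndependent.restrict_scalars hinj
  let e : (Submodule.span ℤ (Set.range ⇑d)) ≃ₗ[ℤ]
      (Submodule.restrictScalars ℤ
        ((dual ℤ ℚ (1 : FractionalIdeal (𝓞 K)⁰ K) : FractionalIdeal (𝓞 K)⁰ K) : Submodule (𝓞 K) K)) :=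
    LinearEquiv.ofEq _ _ hspan.symm
  let bI : Module.Basis _ ℤ ((dual ℤ ℚ (1 : FractionalIdeal (𝓞 K)⁰ K) :
      FractionalIdeal (𝓞 K)⁰ K) : Submodule (𝓞 K) K) :=
    (Module.Basis.span hli).map (e.trans ((Submodule.restrictScalarsEquiv ℤ (𝓞 K) K _).restrictScalars ℤ))
  have habs := abs_det_basis_change (R := 𝓞 K) (K := K) b (dual ℤ ℚ 1) bI
  have hcd : (Subtype.val ∘ ⇑bI : _ → K) = ⇑d := by
    funext i
    simp [bI, e, Module.Basis.span_apply]
    rfl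
  rw [show Module.Basis.localizationLocalization ℚ ℤ⁰ K b = b₀ from rfl, hcd] at habs
  have hdet : b₀.det ⇑d = ((discr K : ℚ))⁻¹ := by
    rw [Module.Basis.det_apply]
    exact eq_inv_of_mul_eq_one_left hdm
  have hdual : FractionalIdeal.absNorm (dual ℤ ℚ (1 : FractionalIdeal (𝓞 K)⁰ K))
      = |(discr K : ℚ)|⁻¹ := by
    rw [← habs, hdet, abs_inv]
  have h1 : ((differentIdeal ℤ (𝓞 K) : Ideal (𝓞 K)) : FractionalIdeal (𝓞 K)⁰ K)
      = (dual ℤ ℚ 1)⁻¹ := coeIdeal_differentIdeal ℤ ℚ K (𝓞 K)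
  have h2 : dual ℤ ℚ (1 : FractionalIdeal (𝓞 K)⁰ K) * (dual ℤ ℚ 1)⁻¹ = 1 :=
    mul_inv_cancel₀ (dual_ne_zero ℤ ℚ one_ne_zero)
  have h3 := congrArg FractionalIdeal.absNorm h2
  rw [_root_.map_mul, _root_.map_one, ← h1, coeIdeal_absNorm, hdual] at h3
  have habs0 : |(discr K : ℚ)| ≠ 0 := abs_ne_zero.mpr h0
  rw [inv_mul_eq_one₀ habs0] at h3
  have h4 : ((Ideal.absNorm (differentIdeal ℤ (𝓞 K)) : ℕ) : ℚ)
      = (((discr K).natAbs : ℕ) : ℚ) := by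
    rw [← h3, Nat.cast_natAbs, Int.cast_abs]
  exact_mod_cast h4

open scoped Classical in
theorem my_finprod_absNorm {I : Ideal (𝓞 K)} (hI : I ≠ 0) :
    ∏ᶠ P : HeightOneSpectrum (𝓞 K),
      ((Ideal.absNorm P.asIdeal : ℝ)) ^ ((primeExponent P I : ℤ)) = Ideal.absNorm I := by
  classical
  let g : Ideal (𝓞 K) →* ℝ :=
    (Nat.castRingHom ℝ).toMonoidHom.comp Ideal.absNorm.toMonoidHom
  have h := congrArg g (Ideal.finprod_heightOneSpectrum_factorization hI)
  rw [MonoidHom.map_finprod g (Ideal.finite_mulSupport hI)] at h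
  have key : ∀ P : HeightOneSpectrum (𝓞 K),
      g (P.maxPowDividing I) = (Ideal.absNorm P.asIdeal : ℝ) ^ ((primeExponent P I : ℤ)) := by
    intro P
    rw [zpow_natCast, IsDedekindDomain.HeightOneSpectrum.maxPowDividing, map_pow]
    congr 1
    rw [primeExponent]
    convert _root_.count_associates_factors_eq hI P.isPrime P.ne_bot using 2
  calc ∏ᶠ P : HeightOneSpectrum (𝓞 K),
        ((Ideal.absNorm P.asIdeal : ℝ)) ^ ((primeExponent P I : ℤ))
      = ∏ᶠ P : HeightOneSpectrum (𝓞 K), g (P.maxPowDividing I) :=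
        finprod_congr fun P => (key P).symm
    _ = g I := h
    _ = Ideal.absNorm I := rfl

open scoped Classical in
/-- The divisor `ω_K'` built from a rational prime `p` and a chosen infinite place `P_∞` has
degree `|disc K| * 2^(-S₂ K)`.  Its coefficient at a nonzero prime ideal `Q` is
`r_Q - 2 e_Q · [Q ∣ p𝓞_K]` (`r_Q` the exponent of `Q` in the different ideal of `𝓞 K` over `ℤ`,
`e_Q` the ramification index of `Q` over `p`), its coefficient at a complex (resp. real)
infinite place is `-log 2` (resp. `0`), the coefficient at `P_∞` being increased by
`a_∞ = (∑_{Q ∣ p} 2 e_Q log N(Q)) / m_{P_∞}`. -/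
theorem deg_omega_prime (p : ℕ) (hp : p.Prime) (Pinf : InfinitePlace K) (ω : Divisor K)
    (ha : ∀ Q : HeightOneSpectrum (𝓞 K),
      ω.a Q = (primeExponent Q (differentIdeal ℤ (𝓞 K)) : ℤ) -
        2 * (ramificationIdx' (Ideal.span {(p : ℤ)}) Q.asIdeal : ℤ) *
          (if Q.asIdeal ∣ Ideal.span {(p : 𝓞 K)} then 1 else 0))
    (hr : ∀ w : InfinitePlace K,
      ω.r w = (if w.IsComplex then -Real.log 2 else 0) +
        (if w = Pinf then
          (∑ᶠ Q : HeightOneSpectrum (𝓞 K),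
            if Q.asIdeal ∣ Ideal.span {(p : 𝓞 K)} then
              2 * (ramificationIdx' (Ideal.span {(p : ℤ)}) Q.asIdeal : ℝ) *
                Real.log (absNorm Q.asIdeal) else 0) / (Pinf.mult : ℝ)
        else 0)) :
    ω.deg = |(discr K : ℝ)| * 2 ^ (-(S2 K : ℤ)) := by
  classical
  have hpne : ((p : 𝓞 K)) ≠ 0 := by
    exact_mod_cast hp.ne_zero
  have hspan_ne : (Ideal.span {(p : 𝓞 K)} : Ideal (𝓞 K)) ≠ 0 := by
    rw [Ne, Submodule.zero_eq_bot, Ideal.span_singleton_eq_bot]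
    exact hpne
  have hdiff_ne : differentIdeal ℤ (𝓞 K) ≠ 0 := by
    intro h
    have h1 := my_absNorm_differentIdeal K
    rw [h, Ideal.zero_eq_bot, Ideal.absNorm_bot] at h1
    exact (Int.natAbs_ne_zero.mpr (discr_ne_zero K)) h1.symm
  have hNpos : ∀ P : HeightOneSpectrum (𝓞 K), (0:ℝ) < (Ideal.absNorm P.asIdeal : ℝ) := by
    intro P
    have hne : Ideal.absNorm P.asIdeal ≠ 0 := by
      rw [Ne, Ideal.absNorm_eq_zero_iff]
      exact P.ne_bot
    exact_mod_cast Nat.pos_of_ne_zero hne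
  set S : ℝ := (∑ᶠ Q : HeightOneSpectrum (𝓞 K),
      if Q.asIdeal ∣ Ideal.span {(p : 𝓞 K)} then
        2 * (ramificationIdx' (Ideal.span {(p : ℤ)}) Q.asIdeal : ℝ) *
          Real.log (absNorm Q.asIdeal) else 0) with hSdef
  set e : HeightOneSpectrum (𝓞 K) → ℝ := fun Q =>
    if Q.asIdeal ∣ Ideal.span {(p : 𝓞 K)} then
      2 * (ramificationIdx' (Ideal.span {(p : ℤ)}) Q.asIdeal : ℝ) *
        Real.log (absNorm Q.asIdeal) else 0 with hedef
  set f : HeightOneSpectrum (𝓞 K) → ℝ := fun P =>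
    (absNorm P.asIdeal : ℝ) ^ ((primeExponent P (differentIdeal ℤ (𝓞 K)) : ℤ)) with hfdef
  set g : HeightOneSpectrum (𝓞 K) → ℝ := fun P =>
    (absNorm P.asIdeal : ℝ) ^ (-(2 * (ramificationIdx'
      (Ideal.span {(p : ℤ)}) P.asIdeal : ℤ) *
        (if P.asIdeal ∣ Ideal.span {(p : 𝓞 K)} then 1 else 0))) with hgdef
  have hsf : (Function.mulSupport f).Finite := by
    apply (Ideal.finite_factors hdiff_ne).subset
    intro P hP
    simp only [Function.mem_mulSupport] at hP
    rw [Set.mem_setOf_eq]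
    by_contra hdvd
    apply hP
    have hcount : primeExponent P (differentIdeal ℤ (𝓞 K)) = 0 := by
      rw [primeExponent]
      apply Multiset.count_eq_zero_of_notMem
      intro hmem
      exact hdvd (UniqueFactorizationMonoid.dvd_of_mem_normalizedFactors hmem)
    rw [hfdef]
    simp only [hcount, Nat.cast_zero, zpow_zero]
  have hsg : (Function.mulSupport g).Finite := by
    apply (Ideal.finite_factors hspan_ne).subset
    intro P hP
    simp only [Function.mem_mulSupport] at hP
    rw [Set.mem_setOf_eq]
    by_contra hdvd
    apply hP
    rw [hgdef]
    simp only [if_neg hdvd, mul_zero, neg_zero, zpow_zero]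
  have hse : (Function.support e).Finite := by
    apply (Ideal.finite_factors hspan_ne).subset
    intro Q hQ
    simp only [Function.mem_support] at hQ
    rw [Set.mem_setOf_eq]
    by_contra hdvd
    apply hQ
    rw [hedef]
    simp only [if_neg hdvd]
  have hge : (Function.mulSupport fun Q => Real.exp (e Q)).Finite := by
    apply hse.subset
    intro Q hQ
    simp only [Function.mem_mulSupport] at hQ
    intro h0
    exact hQ (by rw [h0, Real.exp_zero])
  -- finite part
  have hfin : (∏ᶠ P : HeightOneSpectrum (𝓞 K), (absNorm P.asIdeal : ℝ) ^ (ω.a P))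
      = (∏ᶠ P, f P) * ∏ᶠ P, g P := by
    rw [← finprod_mul_distrib hsf hsg]
    refine finprod_congr fun P => ?_
    rw [ha P, sub_eq_add_neg, zpow_add₀ (ne_of_gt (hNpos P))]
  have hf_eq : (∏ᶠ P, f P) = |(discr K : ℝ)| := by
    rw [hfdef]
    rw [my_finprod_absNorm K hdiff_ne, my_absNorm_differentIdeal K, Nat.cast_natAbs,
      Int.cast_abs]
  -- cancellation
  have hcancel : (∏ᶠ P, g P) * (∏ᶠ Q, Real.exp (e Q)) = 1 := by
    rw [← finprod_mul_distrib hsg hge]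
    rw [show (1:ℝ) = ∏ᶠ _ : HeightOneSpectrum (𝓞 K), (1:ℝ) from (finprod_one).symm]
    refine finprod_congr fun Q => ?_
    by_cases hdvd : Q.asIdeal ∣ Ideal.span {(p : 𝓞 K)}
    · have h1 : g Q = ((absNorm Q.asIdeal : ℝ) ^
          (2 * ramificationIdx' (Ideal.span {(p : ℤ)}) Q.asIdeal))⁻¹ := by
        rw [hgdef]
        simp only [if_pos hdvd, mul_one]
        rw [zpow_neg]
        norm_cast
      have h2 : Real.exp (e Q) = (absNorm Q.asIdeal : ℝ) ^
          (2 * ramificationIdx' (Ideal.span {(p : ℤ)}) Q.asIdeal) := by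
        rw [hedef]
        simp only [if_pos hdvd]
        rw [show (2:ℝ) * (ramificationIdx'
            (Ideal.span {(p : ℤ)}) Q.asIdeal : ℝ)
          = ((2 * ramificationIdx' (Ideal.span {(p : ℤ)}) Q.asIdeal : ℕ) : ℝ)
          from by push_cast; ring]
        rw [Real.exp_nat_mul, Real.exp_log (hNpos Q)]
      rw [h1, h2, inv_mul_cancel₀ (pow_ne_zero _ (hNpos Q).ne')]
    · rw [hgdef, hedef]
      simp only [if_neg hdvd, mul_zero, neg_zero, zpow_zero, Real.exp_zero, one_mul]
  -- archimedean part
  have hmne : ((Pinf.mult : ℝ)) ≠ 0 :=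
    Nat.cast_ne_zero.mpr InfinitePlace.mult_ne_zero
  have harch : (∏ w : InfinitePlace K, Real.exp (w.mult * ω.r w))
      = (2:ℝ) ^ (-(S2 K : ℤ)) * Real.exp S := by
    rw [← Real.exp_sum]
    have hterm : ∀ w : InfinitePlace K, (w.mult : ℝ) * ω.r w =
        (if w.IsComplex then (2:ℝ) * (-Real.log 2) else 0) +
        (if w = Pinf then (w.mult : ℝ) * (S / (Pinf.mult : ℝ)) else 0) := by
      intro w
      rw [hr w, mul_add]
      congr 1
      · by_cases hw : w.IsComplex
        · rw [if_pos hw, if_pos hw]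
          congr 1
          rw [InfinitePlace.mult, if_neg (InfinitePlace.not_isReal_iff_isComplex.mpr hw)]
          norm_num
        · rw [if_neg hw, if_neg hw, mul_zero]
      · by_cases hw : w = Pinf
        · rw [if_pos hw, if_pos hw]
        · rw [if_neg hw, if_neg hw, mul_zero]
    have hsum : ∑ w : InfinitePlace K, (w.mult : ℝ) * ω.r w
        = (-(S2 K : ℝ)) * Real.log 2 + S := by
      rw [Finset.sum_congr rfl (fun w _ => hterm w), Finset.sum_add_distrib]
      congr 1
      · rw [Finset.sum_ite, Finset.sum_const_zero, add_zero, Finset.sum_const, nsmul_eq_mul]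
        have hcard : (Finset.univ.filter (fun w : InfinitePlace K => w.IsComplex)).card
            = InfinitePlace.nrComplexPlaces K := (Fintype.card_subtype _).symm
        rw [hcard]
        simp only [S2]
        push_cast
        ring
      · rw [Finset.sum_ite_eq' Finset.univ Pinf (fun w => (w.mult : ℝ) * (S / (Pinf.mult : ℝ)))]
        rw [if_pos (Finset.mem_univ _), mul_comm, div_mul_cancel₀ S hmne]
    rw [hsum, Real.exp_add]
    congr 1
    rw [show (-(S2 K : ℝ)) * Real.log 2 = Real.log 2 * (((-(S2 K : ℤ)) : ℤ) : ℝ) from by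
      push_cast; ring]
    rw [← Real.rpow_def_of_pos (by norm_num : (0:ℝ) < 2), Real.rpow_intCast]
  have hexpS : Real.exp S = ∏ᶠ Q, Real.exp (e Q) := by
    rw [hSdef, finsum_eq_sum e hse, Real.exp_sum]
    refine (finprod_eq_prod_of_mulSupport_subset _ ?_).symm
    intro Q hQ
    simp only [Function.mem_mulSupport] at hQ
    have heQ : e Q ≠ 0 := fun h0 => hQ (by rw [h0, Real.exp_zero])
    simpa using heQ
  show (∏ᶠ P : HeightOneSpectrum (𝓞 K), (absNorm P.asIdeal : ℝ) ^ (ω.a P)) *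
      (∏ w : InfinitePlace K, Real.exp (w.mult * ω.r w))
      = |(discr K : ℝ)| * 2 ^ (-(S2 K : ℤ))
  rw [hfin, harch, hexpS, hf_eq, mul_mul_mul_comm, hcancel, mul_one]
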